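/- Let i be an integer with (n−2)/2 ≤ i ≤ n−2. Then κ(i) > κ(i+1). -/

import Mathlib

open Finset

/-- `t = s^(e/2)` as a real number. -/
noncomputable def tval (s e : ℕ) : ℝ := (s : ℝ) ^ ((e : ℝ) / 2)

/-- `F(i,k) = ∏_{u=n−2i+k−1}^{n−i−2} (s^u·t + 1)`. -/
noncomputable def F (n s e : ℕ) (i k : ℤ) : ℝ :=
  ∏ u ∈ Finset.Icc ((n:ℤ) - 2*i + k - 1) ((n:ℤ) - i - 2), ((s:ℝ) ^ u * tval s e + 1)

/-- `G(i,k) = s^{(i−k)²} · ∏_{v=1}^{k+1} (s^{i−k+v}−1)/(s^v−1)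
  · ∏_{v=1}^{i−k} (s^{n−2i+k−1+v}−1)/(s^v−1)`. -/
noncomputable def G (n s : ℕ) (i k : ℤ) : ℝ :=
  (s:ℝ) ^ ((i - k)^2) *
  (∏ v ∈ Finset.Icc (1:ℤ) (k + 1), ((s:ℝ) ^ (i - k + v) - 1) / ((s:ℝ) ^ v - 1)) *
  (∏ v ∈ Finset.Icc (1:ℤ) (i - k), ((s:ℝ) ^ ((n:ℤ) - 2*i + k - 1 + v) - 1) / ((s:ℝ) ^ v - 1))

/-- `κ(i) = Σ_{k = max(2i−n+1,−1)}^{i−1} F(i,k)·G(i,k)`, the degree of `(Δ_i, ⊥)`. -/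
noncomputable def kappa (n s e : ℕ) (i : ℤ) : ℝ :=
  ∑ k ∈ Finset.Icc (max (2*i - (n:ℤ) + 1) (-1)) (i - 1), F n s e i k * G n s i k

/-! ### Auxiliary lemmas -/

lemma sum_Icc_bot' (f : ℤ → ℝ) {a b : ℤ} (h : a ≤ b) :
    ∑ u ∈ Icc a b, f u = f a + ∑ u ∈ Icc (a+1) b, f u := by
  have he : Icc a b = insert a (Icc (a+1) b) := by
    ext x; simp only [mem_Icc, mem_insert]; omega
  rw [he, Finset.sum_insert (by simp only [mem_Icc]; omega)]

lemma prod_Icc_bot' (f : ℤ → ℝ) {a b : ℤ} (h : a ≤ b) :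
    ∏ u ∈ Icc a b, f u = f a * ∏ u ∈ Icc (a+1) b, f u := by
  have he : Icc a b = insert a (Icc (a+1) b) := by
    ext x; simp only [mem_Icc, mem_insert]; omega
  rw [he, Finset.prod_insert (by simp only [mem_Icc]; omega)]

lemma prod_Icc_top' (f : ℤ → ℝ) {a b : ℤ} (h : a ≤ b) :
    ∏ u ∈ Icc a b, f u = (∏ u ∈ Icc a (b-1), f u) * f b := by
  have he : Icc a b = insert b (Icc a (b-1)) := by
    ext x; simp only [mem_Icc, mem_insert]; omega
  rw [he, Finset.prod_insert (by simp only [mem_Icc]; omega), mul_comm]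

lemma prod_shift' (f : ℤ → ℝ) (c a b : ℤ) :
    ∏ v ∈ Icc a b, f (c + v) = ∏ u ∈ Icc (c+a) (c+b), f u := by
  rw [← Finset.map_add_left_Icc, Finset.prod_map]; rfl

lemma key_ineq (s t p x q : ℝ) (hs : 2 ≤ s) (ht : 0 < t) (hp : 1 ≤ p)
    (hx : s ≤ x) (hq : p*(s*s) ≤ q) :
    (p*t+1)*(q*x-1)*(p*s-1) ≤ (p*x*t+1)*(q-1)*(p*x*s-1) := by
  have hid : (p*x*t+1)*(q-1)*(p*x*s-1) - (p*t+1)*(q*x-1)*(p*s-1)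
      = (x-1)*((p*p*x*s*t+1)*(q-p*(s*s)) + p*t + p*s*(s-1)
        + p*p*s*t*(x*(p*(s*s)-1)-1)) := by ring
  have h1 : (0:ℝ) ≤ x - 1 := by linarith
  have h2 : (0:ℝ) ≤ q - p*(s*s) := by linarith
  have h3 : (0:ℝ) < p*t := by nlinarith
  have h4 : (0:ℝ) ≤ p*s*(s-1) := by
    nlinarith [mul_nonneg (by linarith : (0:ℝ) ≤ p) (by nlinarith : (0:ℝ) ≤ s*(s-1))]
  have h5 : (0:ℝ) ≤ x*(p*(s*s)-1)-1 := by
    have hps : (4:ℝ) ≤ p*(s*s) := by nlinarith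
    nlinarith [mul_le_mul_of_nonneg_left (by linarith : (3:ℝ) ≤ p*(s*s)-1) (by linarith : (0:ℝ) ≤ x)]
  have h6 : (0:ℝ) ≤ p*p*s*t := by nlinarith
  have h7 : (0:ℝ) < p*p*x*s*t+1 := by nlinarith
  nlinarith [mul_nonneg h7.le h2, mul_nonneg h6 h5,
    mul_nonneg h1 (by nlinarith : (0:ℝ) ≤ (p*p*x*s*t+1)*(q-p*(s*s)) + p*t + p*s*(s-1) + p*p*s*t*(x*(p*(s*s)-1)-1))]

lemma tval_pos {s : ℕ} (hs : 2 ≤ s) (e : ℕ) : 0 < tval s e := by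
  have h : (0:ℝ) < (s:ℝ) := by exact_mod_cast Nat.lt_of_lt_of_le two_pos hs
  exact Real.rpow_pos_of_pos h _

lemma Fpos (n s e : ℕ) (hs : 2 ≤ s) (i k : ℤ) : 0 < F n s e i k := by
  have hs0 : (0:ℝ) < (s:ℝ) := by exact_mod_cast Nat.lt_of_lt_of_le two_pos hs
  apply Finset.prod_pos
  intro u _
  have h1 := zpow_pos hs0 u
  have h2 := tval_pos hs e
  nlinarith

lemma Gpos (n s : ℕ) (hs : 2 ≤ s) (i k : ℤ) (hk : k ≤ i - 1)
    (hc : 0 ≤ (n:ℤ) - 2*i + k - 1) : 0 < G n s i k := by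
  have hs0 : (0:ℝ) < (s:ℝ) := by exact_mod_cast Nat.lt_of_lt_of_le two_pos hs
  have hs1 : (1:ℝ) < (s:ℝ) := by exact_mod_cast Nat.lt_of_lt_of_le one_lt_two hs
  refine mul_pos (mul_pos (zpow_pos hs0 _) ?_) ?_
  · apply Finset.prod_pos
    intro v hv
    rw [mem_Icc] at hv
    exact div_pos (by linarith [one_lt_zpow₀ hs1 (show 0 < i - k + v by omega)])
      (by linarith [one_lt_zpow₀ hs1 (show 0 < v by omega)])
  · apply Finset.prod_pos
    intro v hv
    rw [mem_Icc] at hv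
    exact div_pos (by linarith [one_lt_zpow₀ hs1 (show 0 < (n:ℤ) - 2*i + k - 1 + v by omega)])
      (by linarith [one_lt_zpow₀ hs1 (show 0 < v by omega)])
lemma idF (n s e : ℕ) (hs : 2 ≤ s) (i k : ℤ) (hk : k ≤ i) :
    ((s:ℝ)^((n:ℤ)-2*i+k-2) * tval s e + 1) * F n s e i k
      = ((s:ℝ)^((n:ℤ)-i-2) * tval s e + 1) * F n s e (i+1) (k+1) := by
  unfold F
  rw [show (n:ℤ)-2*(i+1)+(k+1)-1 = (n:ℤ)-2*i+k-2 from by ring,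
      show (n:ℤ)-(i+1)-2 = (n:ℤ)-i-3 from by ring]
  have hab : (n:ℤ)-2*i+k-2 ≤ (n:ℤ)-i-2 := by omega
  have e1 := prod_Icc_bot' (fun u => (s:ℝ)^u * tval s e + 1) hab
  rw [show (n:ℤ)-2*i+k-2+1 = (n:ℤ)-2*i+k-1 from by ring] at e1
  have e2 := prod_Icc_top' (fun u => (s:ℝ)^u * tval s e + 1) hab
  rw [show (n:ℤ)-i-2-1 = (n:ℤ)-i-3 from by ring] at e2
  linear_combination e2 - e1
lemma idG (n s : ℕ) (hs : 2 ≤ s) (i k : ℤ) (hk : -1 ≤ k) (hik : k + 1 ≤ i) :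
    ((s:ℝ)^(k+2) - 1) * (((s:ℝ)^((n:ℤ)-i-1) - 1) * G n s (i+1) (k+1))
      = ((s:ℝ)^(i+2) - 1) * (((s:ℝ)^((n:ℤ)-2*i+k-1) - 1) * G n s i k) := by
  have hs0 : (0:ℝ) < (s:ℝ) := by exact_mod_cast Nat.lt_of_lt_of_le two_pos hs
  have hs1 : (1:ℝ) < (s:ℝ) := by exact_mod_cast Nat.lt_of_lt_of_le one_lt_two hs
  -- denominators are nonzero
  have hden : ∀ v : ℤ, 1 ≤ v → (s:ℝ)^v - 1 ≠ 0 := fun v hv =>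
    ne_of_gt (by linarith [one_lt_zpow₀ hs1 (show 0 < v by omega)])
  -- numerator shift identity for the third product
  have hab : (n:ℤ)-2*i+k-1 ≤ (n:ℤ)-i-1 := by omega
  have h1 : ∏ v ∈ Icc (1:ℤ) (i-k), ((s:ℝ)^((n:ℤ)-2*i+k-2+v) - 1)
      = ∏ u ∈ Icc ((n:ℤ)-2*i+k-2+1) ((n:ℤ)-2*i+k-2+(i-k)), ((s:ℝ)^u - 1) :=
    prod_shift' (fun u => (s:ℝ)^u - 1) ((n:ℤ)-2*i+k-2) 1 (i-k)
  rw [show (n:ℤ)-2*i+k-2+1 = (n:ℤ)-2*i+k-1 from by ring,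
      show (n:ℤ)-2*i+k-2+(i-k) = (n:ℤ)-i-2 from by ring] at h1
  have h2 : ∏ v ∈ Icc (1:ℤ) (i-k), ((s:ℝ)^((n:ℤ)-2*i+k-1+v) - 1)
      = ∏ u ∈ Icc ((n:ℤ)-2*i+k-1+1) ((n:ℤ)-2*i+k-1+(i-k)), ((s:ℝ)^u - 1) :=
    prod_shift' (fun u => (s:ℝ)^u - 1) ((n:ℤ)-2*i+k-1) 1 (i-k)
  rw [show (n:ℤ)-2*i+k-1+1 = (n:ℤ)-2*i+k from by ring,
      show (n:ℤ)-2*i+k-1+(i-k) = (n:ℤ)-i-1 from by ring] at h2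
  have e1 := prod_Icc_top' (fun u => (s:ℝ)^u - 1) hab
  rw [show (n:ℤ)-i-1-1 = (n:ℤ)-i-2 from by ring] at e1
  have e2 := prod_Icc_bot' (fun u => (s:ℝ)^u - 1) hab
  rw [show (n:ℤ)-2*i+k-1+1 = (n:ℤ)-2*i+k from by ring] at e2
  -- hNB : shifted numerators relation
  have hNB : (∏ v ∈ Icc (1:ℤ) (i-k), ((s:ℝ)^((n:ℤ)-2*i+k-2+v) - 1)) * ((s:ℝ)^((n:ℤ)-i-1) - 1)
      = ((s:ℝ)^((n:ℤ)-2*i+k-1) - 1) * ∏ v ∈ Icc (1:ℤ) (i-k), ((s:ℝ)^((n:ℤ)-2*i+k-1+v) - 1) := by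
    rw [h1, h2]
    linear_combination e2 - e1
  -- relation for the third-product fractions
  have hD2 : (∏ v ∈ Icc (1:ℤ) (i-k), ((s:ℝ)^v - 1)) ≠ 0 := by
    apply Finset.prod_ne_zero_iff.mpr
    intro v hv; rw [mem_Icc] at hv; exact hden v hv.1
  have hP2 : (∏ v ∈ Icc (1:ℤ) (i-k), ((s:ℝ)^((n:ℤ)-2*i+k-2+v) - 1) / ((s:ℝ)^v - 1))
        * ((s:ℝ)^((n:ℤ)-i-1) - 1)
      = ((s:ℝ)^((n:ℤ)-2*i+k-1) - 1)
        * ∏ v ∈ Icc (1:ℤ) (i-k), ((s:ℝ)^((n:ℤ)-2*i+k-1+v) - 1) / ((s:ℝ)^v - 1) := by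
    rw [Finset.prod_div_distrib, Finset.prod_div_distrib]
    field_simp
    linear_combination hNB
  -- relation for the first-product fractions
  have hP1 : (∏ v ∈ Icc (1:ℤ) (k+2), ((s:ℝ)^(i-k+v) - 1) / ((s:ℝ)^v - 1)) * ((s:ℝ)^(k+2) - 1)
      = (∏ v ∈ Icc (1:ℤ) (k+1), ((s:ℝ)^(i-k+v) - 1) / ((s:ℝ)^v - 1)) * ((s:ℝ)^(i+2) - 1) := by
    have e3 := prod_Icc_top' (fun v => ((s:ℝ)^(i-k+v) - 1) / ((s:ℝ)^v - 1))
      (show (1:ℤ) ≤ k+2 by omega)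
    rw [show (k:ℤ)+2-1 = k+1 from by ring] at e3
    rw [e3]
    beta_reduce
    have hg : (0:ℝ) < (s:ℝ)^(k+2) - 1 := by
      linarith [one_lt_zpow₀ hs1 (show 0 < k+2 by omega)]
    rw [show i-k+(k+2) = i+2 from by ring, mul_assoc, div_mul_cancel₀ _ (ne_of_gt hg)]
  -- assemble
  unfold G
  simp only [show i+1-(k+1) = i-k from by ring,
    show (n:ℤ)-2*(i+1)+(k+1)-1 = (n:ℤ)-2*i+k-2 from by ring,
    show (k:ℤ)+1+1 = k+2 from by ring]
  set S : ℝ := (s:ℝ)^((i-k)^2) with hS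
  set A1' := ∏ v ∈ Icc (1:ℤ) (k+2), ((s:ℝ)^(i-k+v) - 1) / ((s:ℝ)^v - 1) with hA1'
  set A1 := ∏ v ∈ Icc (1:ℤ) (k+1), ((s:ℝ)^(i-k+v) - 1) / ((s:ℝ)^v - 1) with hA1
  set A2' := ∏ v ∈ Icc (1:ℤ) (i-k), ((s:ℝ)^((n:ℤ)-2*i+k-2+v) - 1) / ((s:ℝ)^v - 1) with hA2'
  set A2 := ∏ v ∈ Icc (1:ℤ) (i-k), ((s:ℝ)^((n:ℤ)-2*i+k-1+v) - 1) / ((s:ℝ)^v - 1) with hA2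
  linear_combination (S * A2' * ((s:ℝ)^((n:ℤ)-i-1) - 1)) * hP1
    + (S * A1 * ((s:ℝ)^(i+2) - 1)) * hP2
lemma term_le (n s e : ℕ) (hs : 2 ≤ s) (i k : ℤ)
    (h2i : (n:ℤ) - 2 ≤ 2*i) (hi' : i ≤ (n:ℤ) - 2)
    (hk1 : 2*i - (n:ℤ) + 2 ≤ k) (hk2 : k ≤ i - 1) :
    F n s e (i+1) (k+1) * G n s (i+1) (k+1) ≤ F n s e i k * G n s i k := by
  have hs0 : (0:ℝ) < (s:ℝ) := by exact_mod_cast Nat.lt_of_lt_of_le two_pos hs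
  have hs1 : (1:ℝ) < (s:ℝ) := by exact_mod_cast Nat.lt_of_lt_of_le one_lt_two hs
  have hs2 : (2:ℝ) ≤ (s:ℝ) := by exact_mod_cast hs
  have ht := tval_pos hs e
  have hsne : (s:ℝ) ≠ 0 := ne_of_gt hs0
  -- the key scalar inequality
  have hp : (1:ℝ) ≤ (s:ℝ)^((n:ℤ)-2*i+k-2) := by
    simpa using zpow_le_zpow_right₀ hs1.le (show (0:ℤ) ≤ (n:ℤ)-2*i+k-2 by omega)
  have hx : (s:ℝ) ≤ (s:ℝ)^(i-k) := by
    simpa using zpow_le_zpow_right₀ hs1.le (show (1:ℤ) ≤ i-k by omega)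
  have hq : (s:ℝ)^((n:ℤ)-2*i+k-2) * ((s:ℝ)*(s:ℝ)) ≤ (s:ℝ)^(k+2) := by
    have h1 : (s:ℝ)^((n:ℤ)-2*i+k-2) * ((s:ℝ)*(s:ℝ)) = (s:ℝ)^((n:ℤ)-2*i+k) := by
      rw [show (n:ℤ)-2*i+k = ((n:ℤ)-2*i+k-2) + 1 + 1 from by ring,
        zpow_add_one₀ hsne, zpow_add_one₀ hsne]
      ring
    rw [h1]
    exact zpow_le_zpow_right₀ hs1.le (by omega)
  have key := key_ineq (s:ℝ) (tval s e) ((s:ℝ)^((n:ℤ)-2*i+k-2)) ((s:ℝ)^(i-k))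
    ((s:ℝ)^(k+2)) hs2 ht hp hx hq
  -- rewrite zpow products
  have hqx : (s:ℝ)^(k+2) * (s:ℝ)^(i-k) = (s:ℝ)^(i+2) := by
    rw [← zpow_add₀ hsne, show k+2+(i-k) = i+2 from by ring]
  have hps : (s:ℝ)^((n:ℤ)-2*i+k-2) * (s:ℝ) = (s:ℝ)^((n:ℤ)-2*i+k-1) := by
    rw [show (n:ℤ)-2*i+k-1 = ((n:ℤ)-2*i+k-2)+1 from by ring, zpow_add_one₀ hsne]
  have hpx : (s:ℝ)^((n:ℤ)-2*i+k-2) * (s:ℝ)^(i-k) = (s:ℝ)^((n:ℤ)-i-2) := by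
    rw [← zpow_add₀ hsne, show (n:ℤ)-2*i+k-2+(i-k) = (n:ℤ)-i-2 from by ring]
  have hpxs : (s:ℝ)^((n:ℤ)-i-2) * (s:ℝ) = (s:ℝ)^((n:ℤ)-i-1) := by
    rw [show (n:ℤ)-i-1 = ((n:ℤ)-i-2)+1 from by ring, zpow_add_one₀ hsne]
  rw [hqx, hps, hpx, hpxs] at key
  -- key : (s^(n-2i+k-2)*t+1)*(s^(i+2)-1)*(s^(n-2i+k-1)-1)
  --     ≤ (s^(n-i-2)*t+1)*(s^(k+2)-1)*(s^(n-i-1)-1)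
  have hF := Fpos n s e hs i k
  have hG := Gpos n s hs i k hk2 (by omega)
  have hFG : (0:ℝ) < F n s e i k * G n s i k := mul_pos hF hG
  have hβ : (0:ℝ) < (s:ℝ)^((n:ℤ)-i-2) * tval s e + 1 := by
    have := zpow_pos hs0 ((n:ℤ)-i-2); nlinarith
  have hγ : (0:ℝ) < (s:ℝ)^(k+2) - 1 := by
    linarith [one_lt_zpow₀ hs1 (show 0 < k+2 by omega)]
  have hδ : (0:ℝ) < (s:ℝ)^((n:ℤ)-i-1) - 1 := by
    linarith [one_lt_zpow₀ hs1 (show 0 < (n:ℤ)-i-1 by omega)]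
  have hidF := idF n s e hs i k (by omega)
  have hidG := idG n s hs i k (by omega) (by omega)
  have hmain : ((s:ℝ)^((n:ℤ)-i-2) * tval s e + 1) * ((s:ℝ)^(k+2) - 1) * ((s:ℝ)^((n:ℤ)-i-1) - 1)
        * (F n s e (i+1) (k+1) * G n s (i+1) (k+1))
      = ((s:ℝ)^((n:ℤ)-2*i+k-2) * tval s e + 1) * ((s:ℝ)^(i+2) - 1)
        * ((s:ℝ)^((n:ℤ)-2*i+k-1) - 1) * (F n s e i k * G n s i k) := by
    linear_combination (-(((s:ℝ)^(k+2) - 1) * ((s:ℝ)^((n:ℤ)-i-1) - 1) * G n s (i+1) (k+1))) * hidF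
      + (((s:ℝ)^((n:ℤ)-2*i+k-2) * tval s e + 1) * F n s e i k) * hidG
  have hfin : ((s:ℝ)^((n:ℤ)-i-2) * tval s e + 1) * ((s:ℝ)^(k+2) - 1) * ((s:ℝ)^((n:ℤ)-i-1) - 1)
        * (F n s e (i+1) (k+1) * G n s (i+1) (k+1))
      ≤ ((s:ℝ)^((n:ℤ)-i-2) * tval s e + 1) * ((s:ℝ)^(k+2) - 1) * ((s:ℝ)^((n:ℤ)-i-1) - 1)
        * (F n s e i k * G n s i k) := by
    rw [hmain]
    exact mul_le_mul_of_nonneg_right key hFG.le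
  have hpos : (0:ℝ) < ((s:ℝ)^((n:ℤ)-i-2) * tval s e + 1) * ((s:ℝ)^(k+2) - 1)
      * ((s:ℝ)^((n:ℤ)-i-1) - 1) := mul_pos (mul_pos hβ hγ) hδ
  calc F n s e (i+1) (k+1) * G n s (i+1) (k+1)
      ≤ F n s e i k * G n s i k := by
        have := (mul_le_mul_iff_right₀ hpos).mp hfin
        exact this
theorem stmt_10 (n s e : ℕ) (hn : 3 ≤ n) (hs : 2 ≤ s) (he : e ≤ 4)
    (i : ℤ) (hi : ((n:ℝ) - 2) / 2 ≤ (i:ℝ)) (hi' : i ≤ (n:ℤ) - 2) :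
    kappa n s e i > kappa n s e (i + 1) := by
  have hn3 : (3:ℤ) ≤ (n:ℤ) := by exact_mod_cast hn
  have h2i : (n:ℤ) - 2 ≤ 2*i := by
    have h1 : (n:ℝ) - 2 ≤ 2*(i:ℝ) := by linarith
    exact_mod_cast h1
  unfold kappa
  rw [max_eq_left (by omega : (-1:ℤ) ≤ 2*i - (n:ℤ) + 1),
      max_eq_left (by omega : (-1:ℤ) ≤ 2*(i+1) - (n:ℤ) + 1)]
  rw [show 2*(i+1) - (n:ℤ) + 1 = (2*i - (n:ℤ) + 2) + 1 from by ring,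
      show i + 1 - 1 = (i-1) + 1 from by ring]
  rw [← Finset.map_add_right_Icc (2*i - (n:ℤ) + 2) (i-1) 1, Finset.sum_map]
  simp only [addRightEmbedding_apply]
  rw [sum_Icc_bot' (fun k => F n s e i k * G n s i k) (by omega : 2*i - (n:ℤ) + 1 ≤ i - 1)]
  rw [show 2*i - (n:ℤ) + 1 + 1 = 2*i - (n:ℤ) + 2 from by ring]
  have hterm : ∑ k ∈ Icc (2*i - (n:ℤ) + 2) (i-1), F n s e (i+1) (k+1) * G n s (i+1) (k+1)
      ≤ ∑ k ∈ Icc (2*i - (n:ℤ) + 2) (i-1), F n s e i k * G n s i k := by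
    apply Finset.sum_le_sum
    intro k hk
    rw [mem_Icc] at hk
    exact term_le n s e hs i k h2i hi' hk.1 hk.2
  have hhead : 0 < F n s e i (2*i - (n:ℤ) + 1) * G n s i (2*i - (n:ℤ) + 1) :=
    mul_pos (Fpos n s e hs i _) (Gpos n s hs i _ (by omega) (by omega))
  linarith
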